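/- Let E be a real Hilbert space, let φ : E → ℝ be differentiable with β-Lipschitz gradient (β > 0) and α-strongly convex (α > 0), and let h : E → ℝ be convex. Set f = φ + h. Fix X, X̃, V ∈ E, δ ≥ 0, and a step size η ∈ (0,1] with 2βη ≤ α. Define ψ(U) := ‖U − X + (1/(2βη))·∇φ(X)‖² + (1/(βη))·h(U). If ψ(V) ≤ ψ(X̃) + δ and X⁺ := (1−η)X + ηV, then f(X⁺) ≤ (1−η)f(X) + η f(X̃) + βη²δ. -/

import Mathlib

open scoped RealInnerProductSpace

section Aux

variable {E : Type*} [NormedAddCommGroup E] [InnerProductSpace ℝ E] [CompleteSpace E]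

/-- Derivative of `t ↦ x + t • v`. -/
lemma aux_line_hasDerivAt (x v : E) (t : ℝ) :
    HasDerivAt (fun t : ℝ => x + t • v) v t := by
  simpa using ((hasDerivAt_id t).smul_const v).const_add x

/-- Derivative of `φ` along a line. -/
lemma aux_comp_hasDerivAt (φ : E → ℝ) (hφ : Differentiable ℝ φ) (x v : E) (t : ℝ) :
    HasDerivAt (fun t : ℝ => φ (x + t • v)) ⟪gradient φ (x + t • v), v⟫ t := by
  have h1 := (hφ (x + t • v)).hasGradientAt.hasFDerivAt.comp_hasDerivAt t
    (aux_line_hasDerivAt x v t)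
  simpa [InnerProductSpace.toDual_apply_apply, Function.comp_def] using h1

/-- 1-D first-order convexity inequality. -/
lemma aux_oneD (q : ℝ → ℝ) (hq : ConvexOn ℝ Set.univ q) {d : ℝ}
    (hd : HasDerivAt q d 0) : q 0 + d ≤ q 1 := by
  have := hq.le_slope_of_hasDerivAt (Set.mem_univ (0 : ℝ)) (Set.mem_univ (1 : ℝ))
    zero_lt_one hd
  rw [slope_def_field] at this
  have h2 : d ≤ q 1 - q 0 := by
    rw [div_eq_mul_inv] at this
    simpa using this
  linarith

/-- Convexity of an affine restriction to a line. -/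
lemma aux_line_convex (g : E → ℝ) (hg : ConvexOn ℝ Set.univ g) (x v : E) :
    ConvexOn ℝ Set.univ (fun t : ℝ => g (x + t • v)) := by
  have hmap : ConvexOn ℝ ((AffineMap.lineMap x (x + v) : ℝ →ᵃ[ℝ] E) ⁻¹' Set.univ)
      (g ∘ (AffineMap.lineMap x (x + v) : ℝ →ᵃ[ℝ] E)) := hg.comp_affineMap _
  simp only [Set.preimage_univ] at hmap
  convert hmap using 2 with t
  simp [AffineMap.lineMap_apply, add_comm]

/-- First-order strong convexity inequality. -/
lemma aux_strong (φ : E → ℝ) (α : ℝ) (hφ : Differentiable ℝ φ)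
    (hs : ConvexOn ℝ Set.univ (fun x => φ x - (α / 2) * ‖x‖ ^ 2)) (x y : E) :
    φ x + ⟪gradient φ x, y - x⟫ + (α / 2) * ‖y - x‖ ^ 2 ≤ φ y := by
  set v := y - x with hv
  set q : ℝ → ℝ := fun t => φ (x + t • v) - (α / 2) * ‖x + t • v‖ ^ 2 with hqdef
  have hqconv : ConvexOn ℝ Set.univ q :=
    aux_line_convex (fun x => φ x - (α / 2) * ‖x‖ ^ 2) hs x v
  have hn : HasDerivAt (fun t : ℝ => ‖x + t • v‖ ^ 2) (2 * ⟪x, v⟫) 0 := by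
    have h1 : HasDerivAt (fun t : ℝ => ⟪x + t • v, x + t • v⟫)
        (⟪x + (0:ℝ) • v, v⟫ + ⟪v, x + (0:ℝ) • v⟫) 0 :=
      (aux_line_hasDerivAt x v 0).inner ℝ (aux_line_hasDerivAt x v 0)
    have h2 : (fun t : ℝ => ⟪x + t • v, x + t • v⟫) = fun t : ℝ => ‖x + t • v‖ ^ 2 := by
      funext t; rw [real_inner_self_eq_norm_sq]
    rw [h2] at h1
    convert h1 using 1
    simp [real_inner_comm]
    ring
  have hq : HasDerivAt q (⟪gradient φ x, v⟫ - α * ⟪x, v⟫) 0 := by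
    have := (aux_comp_hasDerivAt φ hφ x v 0).sub (hn.const_mul (α / 2))
    simp only [zero_smul, add_zero] at this ⊢
    refine this.congr_deriv ?_
    ring
  have := aux_oneD q hqconv hq
  simp only [hqdef, zero_smul, add_zero, one_smul] at this
  have hxy : x + v = y := by rw [hv]; abel
  rw [hxy] at this
  have hns : ‖y‖ ^ 2 = ‖x‖ ^ 2 + 2 * ⟪x, v⟫ + ‖v‖ ^ 2 := by
    have : ‖x + v‖ ^ 2 = ‖x‖ ^ 2 + 2 * ⟪x, v⟫ + ‖v‖ ^ 2 := norm_add_sq_real x v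
    rwa [hxy] at this
  rw [hns] at this
  linarith

/-- Descent lemma for Lipschitz gradients. -/
lemma aux_descent (φ : E → ℝ) (β : ℝ) (hβ : 0 < β) (hφ : Differentiable ℝ φ)
    (hlip : ∀ x y : E, ‖gradient φ x - gradient φ y‖ ≤ β * ‖x - y‖) (x y : E) :
    φ y ≤ φ x + ⟪gradient φ x, y - x⟫ + (β / 2) * ‖y - x‖ ^ 2 := by
  set v := y - x with hv
  set r : ℝ → ℝ := fun t => (β / 2) * ‖v‖ ^ 2 * t ^ 2 - φ (x + t • v) with hrdef
  set r' : ℝ → ℝ := fun t => β * ‖v‖ ^ 2 * t - ⟪gradient φ (x + t • v), v⟫ with hr'def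
  have hr : ∀ t, HasDerivAt r (r' t) t := by
    intro t
    have h1 : HasDerivAt (fun t : ℝ => (β / 2) * ‖v‖ ^ 2 * t ^ 2)
        ((β / 2) * ‖v‖ ^ 2 * (2 * t)) t := by
      simpa using ((hasDerivAt_pow 2 t).const_mul ((β / 2) * ‖v‖ ^ 2))
    have := h1.sub (aux_comp_hasDerivAt φ hφ x v t)
    refine this.congr_deriv ?_
    simp only [hr'def]
    ring
  have hdiff : Differentiable ℝ r := fun t => (hr t).differentiableAt
  have hmono : Monotone r' := by
    intro s t hst
    have key : ⟪gradient φ (x + t • v) - gradient φ (x + s • v), v⟫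
        ≤ β * ((t - s) * ‖v‖) * ‖v‖ := by
      calc ⟪gradient φ (x + t • v) - gradient φ (x + s • v), v⟫
          ≤ ‖gradient φ (x + t • v) - gradient φ (x + s • v)‖ * ‖v‖ :=
            real_inner_le_norm _ _
        _ ≤ (β * ‖(x + t • v) - (x + s • v)‖) * ‖v‖ := by
            apply mul_le_mul_of_nonneg_right (hlip _ _) (norm_nonneg _)
        _ = β * ((t - s) * ‖v‖) * ‖v‖ := by
            have : (x + t • v) - (x + s • v) = (t - s) • v := by
              rw [sub_smul]; abel
            rw [this, norm_smul, Real.norm_eq_abs, abs_of_nonneg (by linarith)]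
    have hsplit : ⟪gradient φ (x + t • v) - gradient φ (x + s • v), v⟫
        = ⟪gradient φ (x + t • v), v⟫ - ⟪gradient φ (x + s • v), v⟫ :=
      inner_sub_left _ _ _
    simp only [hr'def]
    nlinarith [key, hsplit]
  have hconv : ConvexOn ℝ Set.univ r := by
    apply Monotone.convexOn_univ_of_deriv hdiff
    have : deriv r = r' := funext fun t => (hr t).deriv
    rw [this]; exact hmono
  have h0 := aux_oneD r hconv (hr 0)
  simp only [hrdef, hr'def, zero_smul, add_zero, one_smul, mul_zero, zero_sub,
    one_pow, mul_one, zero_pow] at h0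
  have hxy : x + v = y := by rw [hv]; abel
  rw [hxy] at h0
  linarith

end Aux

/-- Exact-gradient deterministic case of Lemma 3.1. -/
theorem stmt_1 {E : Type*} [NormedAddCommGroup E] [InnerProductSpace ℝ E] [CompleteSpace E]
    (φ h f : E → ℝ) (β α : ℝ) (hβ : 0 < β) (hα : 0 < α)
    (hφdiff : Differentiable ℝ φ)
    (hφlip : ∀ x y : E, ‖gradient φ x - gradient φ y‖ ≤ β * ‖x - y‖)
    (hφstrong : ConvexOn ℝ Set.univ (fun x => φ x - (α / 2) * ‖x‖ ^ 2))
    (hconv : ConvexOn ℝ Set.univ h)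
    (hf : ∀ x, f x = φ x + h x)
    (X Xt V : E) (η δ : ℝ) (hη : η ∈ Set.Ioc (0 : ℝ) 1) (hδ : 0 ≤ δ)
    (hηα : 2 * β * η ≤ α)
    (ψ : E → ℝ)
    (hψ : ∀ U, ψ U = ‖U - X + (1 / (2 * β * η)) • gradient φ X‖ ^ 2 + (1 / (β * η)) * h U)
    (hV : ψ V ≤ ψ Xt + δ)
    (Xp : E) (hXp : Xp = (1 - η) • X + η • V) :
    f Xp ≤ (1 - η) * f X + η * f Xt + β * η ^ 2 * δ := by
  obtain ⟨hη0, hη1⟩ := hη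
  set g := gradient φ X with hg
  set c : ℝ := 1 / (2 * β * η) with hc
  set k : ℝ := 1 / (β * η) with hk
  have hβη : 0 < β * η := mul_pos hβ hη0
  -- expansion of ψ
  have hexp : ∀ U : E, ψ U = ‖U - X‖ ^ 2 + 2 * c * ⟪U - X, g⟫ + c ^ 2 * ‖g‖ ^ 2 + k * h U := by
    intro U
    rw [hψ U, norm_add_sq_real, real_inner_smul_right, norm_smul, mul_pow, Real.norm_eq_abs,
      sq_abs]
    ring
  have hkey : ‖V - X‖ ^ 2 + 2 * c * ⟪V - X, g⟫ + k * h V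
      ≤ ‖Xt - X‖ ^ 2 + 2 * c * ⟪Xt - X, g⟫ + k * h Xt + δ := by
    have h1 := hV
    rw [hexp V, hexp Xt] at h1
    linarith
  -- multiply by β η
  have hkey2 : (β * η) * ‖V - X‖ ^ 2 + ⟪V - X, g⟫ + h V
      ≤ (β * η) * ‖Xt - X‖ ^ 2 + ⟪Xt - X, g⟫ + h Xt + (β * η) * δ := by
    have hmul := mul_le_mul_of_nonneg_left hkey (le_of_lt hβη)
    have e1 : (β * η) * (‖V - X‖ ^ 2 + 2 * c * ⟪V - X, g⟫ + k * h V)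
        = (β * η) * ‖V - X‖ ^ 2 + ⟪V - X, g⟫ + h V := by
      rw [hc, hk]; field_simp
    have e2 : (β * η) * (‖Xt - X‖ ^ 2 + 2 * c * ⟪Xt - X, g⟫ + k * h Xt + δ)
        = (β * η) * ‖Xt - X‖ ^ 2 + ⟪Xt - X, g⟫ + h Xt + (β * η) * δ := by
      rw [hc, hk]; field_simp
    linarith [hmul, e1.le, e1.ge, e2.le, e2.ge]
  -- descent
  have hXpX : Xp - X = η • (V - X) := by
    rw [hXp, sub_smul, one_smul, smul_sub]; abel
  have hdes : φ Xp ≤ φ X + η * ⟪g, V - X⟫ + (β / 2) * (η ^ 2 * ‖V - X‖ ^ 2) := by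
    have := aux_descent φ β hβ hφdiff hφlip X Xp
    rw [hXpX, real_inner_smul_right, norm_smul, Real.norm_eq_abs,
      abs_of_nonneg (le_of_lt hη0)] at this
    calc φ Xp ≤ φ X + η * ⟪g, V - X⟫ + β / 2 * (η * ‖V - X‖) ^ 2 := this
      _ = φ X + η * ⟪g, V - X⟫ + (β / 2) * (η ^ 2 * ‖V - X‖ ^ 2) := by ring
  -- convexity of h
  have hhconv : h Xp ≤ (1 - η) * h X + η * h V := by
    rw [hXp]
    have := hconv.2 (Set.mem_univ X) (Set.mem_univ V) (by linarith : (0:ℝ) ≤ 1 - η)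
      (le_of_lt hη0) (by ring)
    simpa using this
  -- strong convexity
  have hstr : φ X + ⟪g, Xt - X⟫ + (α / 2) * ‖Xt - X‖ ^ 2 ≤ φ Xt :=
    aux_strong φ α hφdiff hφstrong X Xt
  -- combine
  have hcV : ⟪V - X, g⟫ = ⟪g, V - X⟫ := real_inner_comm _ _
  have hcXt : ⟪Xt - X, g⟫ = ⟪g, Xt - X⟫ := real_inner_comm _ _
  rw [hcV, hcXt] at hkey2
  have hkey3 := mul_le_mul_of_nonneg_left hkey2 (le_of_lt hη0)
  rw [hf Xp, hf X, hf Xt]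
  nlinarith [hkey3, hdes, hhconv, hstr, sq_nonneg (‖V - X‖), sq_nonneg (‖Xt - X‖),
    mul_nonneg (mul_nonneg hβ.le (sq_nonneg η)) (sq_nonneg ‖V - X‖),
    mul_nonneg (mul_nonneg hη0.le (by linarith : (0:ℝ) ≤ α - 2 * β * η)) (sq_nonneg ‖Xt - X‖)]
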